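/- Let N ≥ 3, s ∈ (1/2, 1), δ > 0 and 0 < Λ₁ ≤ Λ₂. Then there exists a constant C > 0, depending only on N, s, δ, Λ₁, Λ₂, such that for every x ∈ ℝ^N, every Λ ∈ [Λ₁, Λ₂] and every (y,t) ∈ ℝ^N × (0,∞) with |y−x|² + t² = δ², the s-Poisson extension Ũ_{x,Λ} of the bubble U_{x,Λ} is differentiable at (y,t) and its total derivative satisfies ‖∇_{(y,t)} Ũ_{x,Λ}(y,t)‖ ≤ C (1+|y−x|)^{−(N−2s+1)}. -/

import Mathlib

open MeasureTheory

/-- The Aubin–Talenti bubble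
`U_{x,Λ}(y) = (4^s γ)^{(N−2s)/4} (Λ/(1+Λ²|y−x|²))^{(N−2s)/2}`,
where `γ = Γ((N+2s)/2)/Γ((N−2s)/2)`. -/
noncomputable def bubble (N : ℕ) (s : ℝ) (x : EuclideanSpace ℝ (Fin N)) (Λ : ℝ)
    (y : EuclideanSpace ℝ (Fin N)) : ℝ :=
  ((4 : ℝ) ^ s * (Real.Gamma (((N : ℝ) + 2 * s) / 2) / Real.Gamma (((N : ℝ) - 2 * s) / 2)))
      ^ (((N : ℝ) - 2 * s) / 4) *
    (Λ / (1 + Λ ^ 2 * ‖y - x‖ ^ 2)) ^ (((N : ℝ) - 2 * s) / 2)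

/-- The normalizing constant `β(N,s)`, determined by
`∫_{ℝ^N} β(N,s) (|x|²+1)^{−(N+2s)/2} dx = 1`. -/
noncomputable def poissonConst (N : ℕ) (s : ℝ) : ℝ :=
  (∫ x : EuclideanSpace ℝ (Fin N), (‖x‖ ^ 2 + 1) ^ (-((N : ℝ) + 2 * s) / 2))⁻¹

/-- The `s`-Poisson extension
`ũ(y,t) = β(N,s) ∫_{ℝ^N} t^{2s} (|y−ξ|²+t²)^{−(N+2s)/2} u(ξ) dξ`. -/
noncomputable def poissonExt (N : ℕ) (s : ℝ) (u : EuclideanSpace ℝ (Fin N) → ℝ)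
    (y : EuclideanSpace ℝ (Fin N)) (t : ℝ) : ℝ :=
  poissonConst N s *
    ∫ ξ : EuclideanSpace ℝ (Fin N),
      t ^ (2 * s) * (‖y - ξ‖ ^ 2 + t ^ 2) ^ (-((N : ℝ) + 2 * s) / 2) * u ξ

set_option synthInstance.maxHeartbeats 1000000
set_option maxHeartbeats 1000000

lemma aux_majorant {η : EuclideanSpace ℝ (Fin N)} {e : ℝ} (he : e ≤ 0) :
    (‖η‖ ^ 2 + 1) ^ e ≤ (2:ℝ) ^ (-e) * (1 + ‖η‖) ^ (2 * e) := by
  have h0 : (0:ℝ) ≤ ‖η‖ := norm_nonneg η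
  have hB : (0:ℝ) < 1 + ‖η‖ := by positivity
  have h1 : ((1 + ‖η‖) ^ 2 / 2 : ℝ) ≤ ‖η‖ ^ 2 + 1 := by nlinarith [sq_nonneg (‖η‖ - 1)]
  have h2 : (0:ℝ) < (1 + ‖η‖) ^ 2 / 2 := by positivity
  calc (‖η‖ ^ 2 + 1) ^ e ≤ ((1 + ‖η‖) ^ 2 / 2) ^ e :=
        Real.rpow_le_rpow_of_nonpos h2 h1 he
    _ = (2:ℝ) ^ (-e) * (1 + ‖η‖) ^ (2 * e) := by
        rw [Real.div_rpow (by positivity) (by norm_num), Real.rpow_neg (by norm_num),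
          div_eq_mul_inv, mul_comm]
        congr 1
        rw [← Real.rpow_natCast (1 + ‖η‖) 2, ← Real.rpow_mul hB.le]
        norm_num [mul_comm]

lemma aux_integrable (N : ℕ) (e b : ℝ) (hb : 0 ≤ b) (he : e ≤ 0)
    (h : (N : ℝ) + b < -(2 * e)) :
    Integrable (fun η : EuclideanSpace ℝ (Fin N) =>
      (‖η‖ ^ 2 + 1) ^ e * (1 + ‖η‖) ^ b) := by
  have hcont : Continuous (fun η : EuclideanSpace ℝ (Fin N) =>
      (‖η‖ ^ 2 + 1) ^ e * (1 + ‖η‖) ^ b) := by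
    apply Continuous.mul
    · apply Continuous.rpow_const (by continuity)
      intro η; left; positivity
    · apply Continuous.rpow_const (by continuity)
      intro η; left; positivity
  have hfin : (Module.finrank ℝ (EuclideanSpace ℝ (Fin N)) : ℝ) < -(2*e) - b := by
    rw [finrank_euclideanSpace_fin]; linarith
  refine (((integrable_one_add_norm (E := EuclideanSpace ℝ (Fin N))
      (r := -(2*e) - b) hfin).const_mul ((2:ℝ) ^ (-e)))).mono' hcont.aestronglyMeasurable ?_
  filter_upwards with η
  have h0 : (0:ℝ) ≤ ‖η‖ := norm_nonneg η
  have hB : (0:ℝ) < 1 + ‖η‖ := by positivity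
  rw [Real.norm_eq_abs, abs_of_nonneg (by positivity)]
  calc (‖η‖ ^ 2 + 1) ^ e * (1 + ‖η‖) ^ b
      ≤ ((2:ℝ) ^ (-e) * (1 + ‖η‖) ^ (2 * e)) * (1 + ‖η‖) ^ b := by
        apply mul_le_mul_of_nonneg_right (aux_majorant he) (by positivity)
    _ = (2:ℝ) ^ (-e) * (1 + ‖η‖) ^ (-(-(2*e) - b)) := by
        rw [mul_assoc, ← Real.rpow_add hB]; ring_nf

lemma bubble_rewrite (N : ℕ) (s : ℝ) (x : EuclideanSpace ℝ (Fin N)) {Λ : ℝ} (hΛ : 0 < Λ)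
    (y : EuclideanSpace ℝ (Fin N)) :
    bubble N s x Λ y =
      (((4 : ℝ) ^ s * (Real.Gamma (((N : ℝ) + 2 * s) / 2) /
          Real.Gamma (((N : ℝ) - 2 * s) / 2))) ^ (((N : ℝ) - 2 * s) / 4) *
        Λ ^ (((N : ℝ) - 2 * s) / 2)) *
        (1 + Λ ^ 2 * ‖y - x‖ ^ 2) ^ (-(((N : ℝ) - 2 * s) / 2)) := by
  have hf : (0:ℝ) < 1 + Λ ^ 2 * ‖y - x‖ ^ 2 := by positivity
  rw [bubble, Real.div_rpow hΛ.le hf.le, Real.rpow_neg hf.le]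
  ring

lemma bubble_bound (N : ℕ) (s : ℝ) (x : EuclideanSpace ℝ (Fin N)) {Λ : ℝ} (hΛ : 0 < Λ)
    (hp : 0 < ((N : ℝ) - 2 * s) / 2) (z : EuclideanSpace ℝ (Fin N)) :
    |bubble N s x Λ z| ≤
      |((4 : ℝ) ^ s * (Real.Gamma (((N : ℝ) + 2 * s) / 2) /
          Real.Gamma (((N : ℝ) - 2 * s) / 2))) ^ (((N : ℝ) - 2 * s) / 4)| *
        Λ ^ (((N : ℝ) - 2 * s) / 2) := by
  rw [bubble_rewrite N s x hΛ z]
  have hf : (0:ℝ) < 1 + Λ ^ 2 * ‖z - x‖ ^ 2 := by positivity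
  rw [abs_mul, abs_mul, abs_of_pos (Real.rpow_pos_of_pos hΛ _),
    abs_of_pos (Real.rpow_pos_of_pos hf _), mul_assoc]
  have h1 : (1 + Λ ^ 2 * ‖z - x‖ ^ 2) ^ (-(((N : ℝ) - 2 * s) / 2)) ≤ 1 :=
    Real.rpow_le_one_of_one_le_of_nonpos (by nlinarith [norm_nonneg (z - x)]) (by linarith)
  calc _ ≤ _ := mul_le_mul_of_nonneg_left
        (mul_le_mul_of_nonneg_left h1 (Real.rpow_pos_of_pos hΛ _).le) (abs_nonneg _)
    _ = _ := by rw [mul_one]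

/-- Derivative data for the bubble. -/
lemma bubble_hasFDerivAt (N : ℕ) (s : ℝ) (x : EuclideanSpace ℝ (Fin N)) {Λ : ℝ} (hΛ : 0 < Λ)
    (hp : 0 < ((N : ℝ) - 2 * s) / 2) :
    ∃ u' : EuclideanSpace ℝ (Fin N) → (EuclideanSpace ℝ (Fin N) →L[ℝ] ℝ),
      Continuous u' ∧ (∀ z, HasFDerivAt (bubble N s x Λ) (u' z) z) ∧
      (∀ z, ‖u' z‖ ≤
        |((4 : ℝ) ^ s * (Real.Gamma (((N : ℝ) + 2 * s) / 2) /
            Real.Gamma (((N : ℝ) - 2 * s) / 2))) ^ (((N : ℝ) - 2 * s) / 4)| *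
          (((N : ℝ) - 2 * s) / 2) * Λ ^ (((N : ℝ) - 2 * s) / 2) * Λ) := by
  set p : ℝ := ((N : ℝ) - 2 * s) / 2 with hpdef
  set c : ℝ := ((4 : ℝ) ^ s * (Real.Gamma (((N : ℝ) + 2 * s) / 2) /
      Real.Gamma (((N : ℝ) - 2 * s) / 2))) ^ (((N : ℝ) - 2 * s) / 4) with hcdef
  set a : ℝ := c * Λ ^ p with hadef
  have hf : ∀ z : EuclideanSpace ℝ (Fin N), (0:ℝ) < 1 + Λ ^ 2 * ‖z - x‖ ^ 2 := by
    intro z; positivity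
  refine ⟨fun z =>
    (a * (-p) * (1 + Λ ^ 2 * ‖z - x‖ ^ 2) ^ (-p - 1) * Λ ^ 2 * 2) • (innerSL ℝ (z - x)),
    ?_, ?_, ?_⟩
  · apply Continuous.fun_smul
    · apply Continuous.mul (Continuous.mul (Continuous.mul continuous_const ?_) continuous_const)
        continuous_const
      apply Continuous.rpow_const (by continuity)
      intro z; left; exact (hf z).ne'
    · exact (innerSL ℝ).continuous.comp (continuous_id.sub continuous_const)
  · intro z
    have h1 : HasFDerivAt (fun y : EuclideanSpace ℝ (Fin N) => ‖y - x‖ ^ 2)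
        ((2:ℕ) • (innerSL ℝ (z - x))) z := by
      have := ((hasFDerivAt_id z).sub_const x).norm_sq
      simpa using this
    have h2 : HasFDerivAt (fun y : EuclideanSpace ℝ (Fin N) => 1 + Λ ^ 2 * ‖y - x‖ ^ 2)
        (Λ ^ 2 • ((2:ℕ) • (innerSL ℝ (z - x)))) z := (h1.const_mul (Λ ^ 2)).const_add 1
    have h3 := (h2.rpow_const (p := -p) (Or.inl (hf z).ne')).const_mul a
    have heq : (fun y : EuclideanSpace ℝ (Fin N) =>
        a * (1 + Λ ^ 2 * ‖y - x‖ ^ 2) ^ (-p)) = bubble N s x Λ := by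
      funext y; rw [bubble_rewrite N s x hΛ y]
    rw [heq] at h3
    refine h3.congr_fderiv ?_
    ext v
    simp only [ContinuousLinearMap.coe_smul', Pi.smul_apply, smul_eq_mul, two_smul,
      ContinuousLinearMap.add_apply]
    ring
  · intro z
    have hfz := hf z
    have hXpos : (0:ℝ) < (1 + Λ ^ 2 * ‖z - x‖ ^ 2) ^ (-p - 1) := Real.rpow_pos_of_pos hfz _
    show ‖(a * (-p) * (1 + Λ ^ 2 * ‖z - x‖ ^ 2) ^ (-p - 1) * Λ ^ 2 * 2) •
        (innerSL ℝ (z - x))‖ ≤ |c| * p * Λ ^ p * Λ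
    rw [norm_smul (a * -p * (1 + Λ ^ 2 * ‖z - x‖ ^ 2) ^ (-p - 1) * Λ ^ 2 * 2) ((innerSL ℝ) (z - x)), innerSL_apply_norm, Real.norm_eq_abs]
    have habs : |a * (-p) * (1 + Λ ^ 2 * ‖z - x‖ ^ 2) ^ (-p - 1) * Λ ^ 2 * 2| =
        |c| * Λ ^ p * p * (1 + Λ ^ 2 * ‖z - x‖ ^ 2) ^ (-p - 1) * Λ ^ 2 * 2 := by
      rw [hadef, abs_mul, abs_mul, abs_mul, abs_mul, abs_mul, abs_neg, abs_of_pos hp,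
        abs_of_pos (Real.rpow_pos_of_pos hΛ _), abs_of_pos hXpos,
        abs_of_pos (by positivity : (0:ℝ) < Λ ^ 2)]
      norm_num
    rw [habs]
    have key : (1 + Λ ^ 2 * ‖z - x‖ ^ 2) ^ (-p - 1) * (2 * ‖z - x‖) ≤ 1 / Λ := by
      have hb1 : (1 + Λ ^ 2 * ‖z - x‖ ^ 2) ^ (-p - 1) ≤ (1 + Λ ^ 2 * ‖z - x‖ ^ 2)⁻¹ := by
        rw [← Real.rpow_neg_one (1 + Λ ^ 2 * ‖z - x‖ ^ 2)]
        exact Real.rpow_le_rpow_of_exponent_le (by nlinarith [norm_nonneg (z - x)])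
          (by linarith)
      have h2 : 2 * Λ * ‖z - x‖ ≤ 1 + Λ ^ 2 * ‖z - x‖ ^ 2 := by
        nlinarith [sq_nonneg (1 - Λ * ‖z - x‖)]
      calc (1 + Λ ^ 2 * ‖z - x‖ ^ 2) ^ (-p - 1) * (2 * ‖z - x‖)
          ≤ (1 + Λ ^ 2 * ‖z - x‖ ^ 2)⁻¹ * (2 * ‖z - x‖) :=
            mul_le_mul_of_nonneg_right hb1 (by positivity)
        _ ≤ 1 / Λ := by
            rw [inv_mul_le_iff₀ hfz]
            calc 2 * ‖z - x‖ = Λ⁻¹ * (2 * Λ * ‖z - x‖) := by field_simp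
              _ ≤ Λ⁻¹ * (1 + Λ ^ 2 * ‖z - x‖ ^ 2) :=
                  mul_le_mul_of_nonneg_left h2 (by positivity)
              _ = (1 + Λ ^ 2 * ‖z - x‖ ^ 2) * (1 / Λ) := by ring
    calc |c| * Λ ^ p * p * (1 + Λ ^ 2 * ‖z - x‖ ^ 2) ^ (-p - 1) * Λ ^ 2 * 2 * ‖z - x‖
        = (|c| * Λ ^ p * p * Λ ^ 2) *
            ((1 + Λ ^ 2 * ‖z - x‖ ^ 2) ^ (-p - 1) * (2 * ‖z - x‖)) := by ring
      _ ≤ (|c| * Λ ^ p * p * Λ ^ 2) * (1 / Λ) :=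
          mul_le_mul_of_nonneg_left key (by positivity)
      _ = |c| * p * Λ ^ p * Λ := by field_simp

lemma key_hasFDerivAt (N : ℕ) (e M M₀ : ℝ) (he : e ≤ 0) (hM : 0 ≤ M) (hM₀ : 0 ≤ M₀)
    (hN1 : (N : ℝ) + 1 < -(2 * e))
    (u : EuclideanSpace ℝ (Fin N) → ℝ)
    (u' : EuclideanSpace ℝ (Fin N) → (EuclideanSpace ℝ (Fin N) →L[ℝ] ℝ))
    (hu'c : Continuous u') (hu : ∀ z, HasFDerivAt u (u' z) z)
    (hub : ∀ z, |u z| ≤ M₀) (hu'b : ∀ z, ‖u' z‖ ≤ M)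
    (p₀ : EuclideanSpace ℝ (Fin N) × ℝ) :
    ∃ Φ : (EuclideanSpace ℝ (Fin N) × ℝ) →L[ℝ] ℝ,
      HasFDerivAt (fun p : EuclideanSpace ℝ (Fin N) × ℝ =>
        ∫ η : EuclideanSpace ℝ (Fin N), (‖η‖ ^ 2 + 1) ^ e * u (p.1 - p.2 • η)) Φ p₀ ∧
      ‖Φ‖ ≤ M * ∫ η : EuclideanSpace ℝ (Fin N), (‖η‖ ^ 2 + 1) ^ e * (1 + ‖η‖) := by
  have hucont : Continuous u :=
    continuous_iff_continuousAt.2 fun z => (hu z).differentiableAt.continuousAt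
  set L : EuclideanSpace ℝ (Fin N) → ((EuclideanSpace ℝ (Fin N) × ℝ) →L[ℝ] EuclideanSpace ℝ (Fin N)) := fun η =>
    (ContinuousLinearMap.fst ℝ (EuclideanSpace ℝ (Fin N)) ℝ) - (ContinuousLinearMap.snd ℝ (EuclideanSpace ℝ (Fin N)) ℝ).smulRight η with hLdef
  have hLapp : ∀ (η : EuclideanSpace ℝ (Fin N)) (p : EuclideanSpace ℝ (Fin N) × ℝ), L η p = p.1 - p.2 • η := fun η p => rfl
  have hLnorm : ∀ η : EuclideanSpace ℝ (Fin N), ‖L η‖ ≤ 1 + ‖η‖ := by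
    intro η
    refine ContinuousLinearMap.opNorm_le_bound _ (by positivity) fun p => ?_
    rw [hLapp]
    calc ‖p.1 - p.2 • η‖ ≤ ‖p.1‖ + ‖p.2 • η‖ := norm_sub_le _ _
      _ = ‖p.1‖ + ‖p.2‖ * ‖η‖ := by rw [norm_smul]
      _ ≤ ‖p‖ + ‖p‖ * ‖η‖ := by
          have h1 := norm_fst_le p
          have h2 := norm_snd_le p
          have := norm_nonneg η
          nlinarith [norm_nonneg p]
      _ = (1 + ‖η‖) * ‖p‖ := by ring
  have hwpos : ∀ η : EuclideanSpace ℝ (Fin N), (0:ℝ) < (‖η‖ ^ 2 + 1) ^ e := fun η =>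
    Real.rpow_pos_of_pos (by positivity) _
  have hwcont : Continuous fun η : EuclideanSpace ℝ (Fin N) => (‖η‖ ^ 2 + 1) ^ e := by
    apply Continuous.rpow_const (by continuity)
    intro η; left; positivity
  set F' : (EuclideanSpace ℝ (Fin N) × ℝ) → EuclideanSpace ℝ (Fin N) → ((EuclideanSpace ℝ (Fin N) × ℝ) →L[ℝ] ℝ) := fun p η =>
    ((‖η‖ ^ 2 + 1) ^ e) • ((u' (p.1 - p.2 • η)).comp (L η)) with hF'def
  have h_diff : ∀ (η : EuclideanSpace ℝ (Fin N)) (p : EuclideanSpace ℝ (Fin N) × ℝ),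
      HasFDerivAt (fun p : EuclideanSpace ℝ (Fin N) × ℝ => (‖η‖ ^ 2 + 1) ^ e * u (p.1 - p.2 • η)) (F' p η) p := by
    intro η p
    have hA : HasFDerivAt (fun p : EuclideanSpace ℝ (Fin N) × ℝ => p.1 - p.2 • η) (L η) p := (L η).hasFDerivAt
    have := ((hu (p.1 - p.2 • η)).comp p hA).const_mul ((‖η‖ ^ 2 + 1) ^ e)
    simpa [Function.comp] using this
  have h_bound : ∀ (η : EuclideanSpace ℝ (Fin N)) (p : EuclideanSpace ℝ (Fin N) × ℝ),
      ‖F' p η‖ ≤ M * ((‖η‖ ^ 2 + 1) ^ e * (1 + ‖η‖)) := by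
    intro η p
    rw [hF'def]
    calc ‖((‖η‖ ^ 2 + 1) ^ e) • ((u' (p.1 - p.2 • η)).comp (L η))‖
        = (‖η‖ ^ 2 + 1) ^ e * ‖(u' (p.1 - p.2 • η)).comp (L η)‖ := by
          rw [norm_smul ((‖η‖ ^ 2 + 1) ^ e) ((u' (p.1 - p.2 • η)).comp (L η)), Real.norm_eq_abs, abs_of_pos (hwpos η)]
      _ ≤ (‖η‖ ^ 2 + 1) ^ e * (M * (1 + ‖η‖)) := by
          apply mul_le_mul_of_nonneg_left _ (hwpos η).le
          calc ‖(u' (p.1 - p.2 • η)).comp (L η)‖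
              ≤ ‖u' (p.1 - p.2 • η)‖ * ‖L η‖ := ContinuousLinearMap.opNorm_comp_le _ _
            _ ≤ M * (1 + ‖η‖) := by
                apply mul_le_mul (hu'b _) (hLnorm η) (norm_nonneg _) hM
      _ = M * ((‖η‖ ^ 2 + 1) ^ e * (1 + ‖η‖)) := by ring
  have hbound_int : Integrable (fun η : EuclideanSpace ℝ (Fin N) => M * ((‖η‖ ^ 2 + 1) ^ e * (1 + ‖η‖))) := by
    have := (aux_integrable N e 1 zero_le_one he (by linarith)).const_mul M
    simpa using this
  have hw_int : Integrable (fun η : EuclideanSpace ℝ (Fin N) => (‖η‖ ^ 2 + 1) ^ e) := by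
    have := aux_integrable N e 0 le_rfl he (by linarith)
    simpa using this
  have hF_int : Integrable (fun η : EuclideanSpace ℝ (Fin N) => (‖η‖ ^ 2 + 1) ^ e * u (p₀.1 - p₀.2 • η)) := by
    refine (hw_int.const_mul M₀).mono' ?_ ?_
    · exact (hwcont.mul (hucont.comp
        (continuous_const.sub (continuous_const_smul p₀.2)))).aestronglyMeasurable
    · filter_upwards with η
      rw [Real.norm_eq_abs, abs_mul, abs_of_pos (hwpos η)]
      calc (‖η‖ ^ 2 + 1) ^ e * |u (p₀.1 - p₀.2 • η)| ≤ (‖η‖ ^ 2 + 1) ^ e * M₀ :=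
            mul_le_mul_of_nonneg_left (hub _) (hwpos η).le
        _ = M₀ * (‖η‖ ^ 2 + 1) ^ e := by ring
  have hF'_meas : AEStronglyMeasurable (F' p₀) volume := by
    apply Continuous.aestronglyMeasurable
    apply Continuous.smul hwcont
    apply Continuous.clm_comp
    · exact hu'c.comp (continuous_const.sub (continuous_const_smul p₀.2))
    · exact continuous_const.sub
        (((ContinuousLinearMap.smulRightL ℝ (EuclideanSpace ℝ (Fin N) × ℝ) (EuclideanSpace ℝ (Fin N)))
          (ContinuousLinearMap.snd ℝ (EuclideanSpace ℝ (Fin N)) ℝ)).continuous)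
  have main := hasFDerivAt_integral_of_dominated_of_fderiv_le (𝕜 := ℝ)
    (F := fun (p : EuclideanSpace ℝ (Fin N) × ℝ) (η : EuclideanSpace ℝ (Fin N)) => (‖η‖ ^ 2 + 1) ^ e * u (p.1 - p.2 • η))
    (F' := F') (x₀ := p₀) (bound := fun η => M * ((‖η‖ ^ 2 + 1) ^ e * (1 + ‖η‖)))
    Filter.univ_mem
    (Filter.Eventually.of_forall fun p => (hwcont.mul (hucont.comp
        (continuous_const.sub (continuous_id.const_smul p.2)))).aestronglyMeasurable)
    hF_int hF'_meas
    (Filter.Eventually.of_forall fun η => fun p _ => h_bound η p)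
    hbound_int
    (Filter.Eventually.of_forall fun η => fun p _ => h_diff η p)
  refine ⟨_, main, ?_⟩
  calc ‖∫ η : EuclideanSpace ℝ (Fin N), F' p₀ η‖ ≤ ∫ η : EuclideanSpace ℝ (Fin N), M * ((‖η‖ ^ 2 + 1) ^ e * (1 + ‖η‖)) :=
        norm_integral_le_of_norm_le hbound_int
          (Filter.Eventually.of_forall fun η => h_bound η p₀)
    _ = M * ∫ η : EuclideanSpace ℝ (Fin N), (‖η‖ ^ 2 + 1) ^ e * (1 + ‖η‖) := integral_const_mul _ _

lemma cov (N : ℕ) (s : ℝ) (u : EuclideanSpace ℝ (Fin N) → ℝ)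
    (y : EuclideanSpace ℝ (Fin N)) {t : ℝ} (ht : 0 < t) :
    (∫ ξ : EuclideanSpace ℝ (Fin N),
        t ^ (2 * s) * (‖y - ξ‖ ^ 2 + t ^ 2) ^ (-((N : ℝ) + 2 * s) / 2) * u ξ)
      = ∫ η : EuclideanSpace ℝ (Fin N),
          (‖η‖ ^ 2 + 1) ^ (-((N : ℝ) + 2 * s) / 2) * u (y - t • η) := by
  set e : ℝ := -((N : ℝ) + 2 * s) / 2 with hedef
  set G : EuclideanSpace ℝ (Fin N) → ℝ :=
    fun z => t ^ (2 * s) * (‖z‖ ^ 2 + t ^ 2) ^ e * u (y - z) with hGdef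
  have step1 : (∫ ξ : EuclideanSpace ℝ (Fin N),
      t ^ (2 * s) * (‖y - ξ‖ ^ 2 + t ^ 2) ^ e * u ξ) = ∫ ξ, G (y - ξ) := by
    congr 1; funext ξ; rw [hGdef]; simp [sub_sub_cancel]
  have step2 : (∫ ξ, G (y - ξ)) = ∫ z, G z := integral_sub_left_eq_self G volume y
  have hsmul := MeasureTheory.Measure.integral_comp_smul (μ := (volume : Measure (EuclideanSpace ℝ (Fin N)))) G t
  rw [finrank_euclideanSpace_fin] at hsmul
  have habs : |((t ^ N : ℝ))⁻¹| = (t ^ N)⁻¹ := abs_of_pos (by positivity)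
  have step4 : ∀ η : EuclideanSpace ℝ (Fin N), G (t • η) =
      (t ^ (2 * s) * (t ^ 2 : ℝ) ^ e) * ((‖η‖ ^ 2 + 1) ^ e * u (y - t • η)) := by
    intro η
    rw [hGdef]
    have hn : ‖t • η‖ ^ 2 = t ^ 2 * ‖η‖ ^ 2 := by
      rw [norm_smul, Real.norm_eq_abs, abs_of_pos ht, mul_pow]
    simp only [hn]
    have harg : t ^ 2 * ‖η‖ ^ 2 + t ^ 2 = t ^ 2 * (‖η‖ ^ 2 + 1) := by ring
    rw [harg, Real.mul_rpow (by positivity) (by positivity)]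
    ring
  have step5 : (∫ η, G (t • η)) =
      (t ^ (2 * s) * (t ^ 2 : ℝ) ^ e) *
        ∫ η : EuclideanSpace ℝ (Fin N), (‖η‖ ^ 2 + 1) ^ e * u (y - t • η) := by
    rw [show (fun η : EuclideanSpace ℝ (Fin N) => G (t • η)) = fun η =>
      (t ^ (2 * s) * (t ^ 2 : ℝ) ^ e) * ((‖η‖ ^ 2 + 1) ^ e * u (y - t • η)) from funext step4]
    exact integral_const_mul _ _
  have hscal : (t ^ N : ℝ) * (t ^ (2 * s) * (t ^ 2 : ℝ) ^ e) = 1 := by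
    rw [← Real.rpow_natCast t N, ← Real.rpow_natCast t 2, ← Real.rpow_mul ht.le,
      ← Real.rpow_add ht, ← Real.rpow_add ht]
    rw [show (N : ℝ) + (2 * s + (2 : ℕ) * e) = 0 by push_cast [hedef]; ring, Real.rpow_zero]
  calc (∫ ξ : EuclideanSpace ℝ (Fin N),
        t ^ (2 * s) * (‖y - ξ‖ ^ 2 + t ^ 2) ^ e * u ξ)
      = ∫ z, G z := by rw [step1, step2]
    _ = (t ^ N : ℝ) * ∫ η, G (t • η) := by
        rw [hsmul, habs, smul_eq_mul, ← mul_assoc, mul_inv_cancel₀ (by positivity), one_mul]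
    _ = ((t ^ N : ℝ) * (t ^ (2 * s) * (t ^ 2 : ℝ) ^ e)) *
          ∫ η : EuclideanSpace ℝ (Fin N), (‖η‖ ^ 2 + 1) ^ e * u (y - t • η) := by
        rw [step5]; ring
    _ = _ := by rw [hscal, one_mul]

/-- For `N ≥ 3`, `s ∈ (1/2,1)`, `δ > 0` and `0 < Λ₁ ≤ Λ₂`, there is
`C > 0` such that for all `x`, `Λ ∈ [Λ₁,Λ₂]` and `(y,t)` with `t > 0` and
`|y−x|² + t² = δ²`, the extension `Ũ_{x,Λ}` is differentiable at `(y,t)` and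
`‖∇Ũ_{x,Λ}(y,t)‖ ≤ C(1+|y−x|)^{−(N−2s+1)}`. -/
theorem stmt_9 (N : ℕ) (hN : 3 ≤ N) (s : ℝ) (hs : s ∈ Set.Ioo (1 / 2 : ℝ) 1)
    (δ : ℝ) (hδ : 0 < δ) (Λ₁ Λ₂ : ℝ) (hΛ₁ : 0 < Λ₁) (hΛ : Λ₁ ≤ Λ₂) :
    ∃ C > 0, ∀ (x : EuclideanSpace ℝ (Fin N)), ∀ Λ ∈ Set.Icc Λ₁ Λ₂,
      ∀ (y : EuclideanSpace ℝ (Fin N)) (t : ℝ), 0 < t → ‖y - x‖ ^ 2 + t ^ 2 = δ ^ 2 →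
        DifferentiableAt ℝ
            (fun p : EuclideanSpace ℝ (Fin N) × ℝ =>
              poissonExt N s (bubble N s x Λ) p.1 p.2) (y, t) ∧
          ‖fderiv ℝ
              (fun p : EuclideanSpace ℝ (Fin N) × ℝ =>
                poissonExt N s (bubble N s x Λ) p.1 p.2) (y, t)‖ ≤
            C * (1 + ‖y - x‖) ^ (-((N : ℝ) - 2 * s + 1)) := by
  obtain ⟨hs1, hs2⟩ := hs
  have hN3 : (3:ℝ) ≤ (N:ℝ) := by exact_mod_cast hN
  have hp : 0 < ((N : ℝ) - 2 * s) / 2 := by linarith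
  have he : -((N : ℝ) + 2 * s) / 2 ≤ 0 := by
    have : (0:ℝ) < (N : ℝ) + 2 * s := by linarith
    linarith
  have hN1 : (N : ℝ) + 1 < -(2 * (-((N : ℝ) + 2 * s) / 2)) := by
    have : -(2 * (-((N : ℝ) + 2 * s) / 2)) = (N : ℝ) + 2 * s := by ring
    rw [this]; linarith
  have hΛ2pos : 0 < Λ₂ := lt_of_lt_of_le hΛ₁ hΛ
  set M : ℝ := |((4 : ℝ) ^ s * (Real.Gamma (((N : ℝ) + 2 * s) / 2) /
      Real.Gamma (((N : ℝ) - 2 * s) / 2))) ^ (((N : ℝ) - 2 * s) / 4)| *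
      (((N : ℝ) - 2 * s) / 2) * Λ₂ ^ (((N : ℝ) - 2 * s) / 2) * Λ₂ with hMdef
  have hM0 : 0 ≤ M := by
    rw [hMdef]
    have := Real.rpow_pos_of_pos hΛ2pos (((N : ℝ) - 2 * s) / 2)
    positivity
  set M₀ : ℝ := |((4 : ℝ) ^ s * (Real.Gamma (((N : ℝ) + 2 * s) / 2) /
      Real.Gamma (((N : ℝ) - 2 * s) / 2))) ^ (((N : ℝ) - 2 * s) / 4)| *
      Λ₂ ^ (((N : ℝ) - 2 * s) / 2) with hM₀def
  have hM₀0 : 0 ≤ M₀ := by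
    rw [hM₀def]
    have := Real.rpow_pos_of_pos hΛ2pos (((N : ℝ) - 2 * s) / 2)
    positivity
  set I : ℝ := ∫ η : EuclideanSpace ℝ (Fin N),
      (‖η‖ ^ 2 + 1) ^ (-((N : ℝ) + 2 * s) / 2) * (1 + ‖η‖) with hIdef
  have hI0 : 0 ≤ I := by
    rw [hIdef]
    refine integral_nonneg fun η => ?_
    have h1 : (0:ℝ) < (‖η‖ ^ 2 + 1) ^ (-((N : ℝ) + 2 * s) / 2) :=
      Real.rpow_pos_of_pos (by positivity) _
    have h2 : (0:ℝ) ≤ 1 + ‖η‖ := by positivity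
    positivity
  set K : ℝ := |poissonConst N s| * (M * I) + 1 with hKdef
  have hKpos : 0 < K := by
    rw [hKdef]
    nlinarith [abs_nonneg (poissonConst N s), mul_nonneg hM0 hI0,
      mul_nonneg (abs_nonneg (poissonConst N s)) (mul_nonneg hM0 hI0)]
  have ha0 : 0 ≤ (N : ℝ) - 2 * s + 1 := by linarith
  refine ⟨K * (1 + δ) ^ ((N : ℝ) - 2 * s + 1),
    mul_pos hKpos (Real.rpow_pos_of_pos (by linarith) _), ?_⟩
  intro x Λ hΛmem y t ht hsphere
  obtain ⟨hΛlo, hΛhi⟩ := hΛmem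
  have hΛpos : 0 < Λ := lt_of_lt_of_le hΛ₁ hΛlo
  obtain ⟨u', hu'c, hu'd, hu'b⟩ := bubble_hasFDerivAt N s x hΛpos hp
  have hrpowle : Λ ^ (((N : ℝ) - 2 * s) / 2) ≤ Λ₂ ^ (((N : ℝ) - 2 * s) / 2) :=
    Real.rpow_le_rpow hΛpos.le hΛhi hp.le
  have hMb : ∀ z, ‖u' z‖ ≤ M := by
    intro z
    refine (hu'b z).trans ?_
    rw [hMdef]
    have h0 : (0:ℝ) ≤ |((4 : ℝ) ^ s * (Real.Gamma (((N : ℝ) + 2 * s) / 2) /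
        Real.Gamma (((N : ℝ) - 2 * s) / 2))) ^ (((N : ℝ) - 2 * s) / 4)| *
        (((N : ℝ) - 2 * s) / 2) := by positivity
    refine mul_le_mul (mul_le_mul_of_nonneg_left hrpowle h0) hΛhi hΛpos.le ?_
    have := Real.rpow_pos_of_pos hΛ2pos (((N : ℝ) - 2 * s) / 2)
    positivity
  have hM₀b : ∀ z, |bubble N s x Λ z| ≤ M₀ := by
    intro z
    refine (bubble_bound N s x hΛpos hp z).trans ?_
    rw [hM₀def]
    exact mul_le_mul_of_nonneg_left hrpowle (abs_nonneg _)
  obtain ⟨Φ, hΦ, hΦnorm⟩ := key_hasFDerivAt N (-((N : ℝ) + 2 * s) / 2) M M₀ he hM0 hM₀0 hN1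
    (bubble N s x Λ) u' hu'c hu'd hM₀b hMb (y, t)
  have hopen : IsOpen {p : EuclideanSpace ℝ (Fin N) × ℝ | 0 < p.2} :=
    isOpen_lt continuous_const continuous_snd
  have hmem : (y, t) ∈ {p : EuclideanSpace ℝ (Fin N) × ℝ | 0 < p.2} := ht
  have hev : (fun p : EuclideanSpace ℝ (Fin N) × ℝ =>
      poissonExt N s (bubble N s x Λ) p.1 p.2) =ᶠ[nhds (y, t)]
      (fun p : EuclideanSpace ℝ (Fin N) × ℝ => poissonConst N s *
        ∫ η : EuclideanSpace ℝ (Fin N), (‖η‖ ^ 2 + 1) ^ (-((N : ℝ) + 2 * s) / 2) *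
          bubble N s x Λ (p.1 - p.2 • η)) := by
    filter_upwards [hopen.mem_nhds hmem] with p hp2
    rw [poissonExt, cov N s _ p.1 hp2]
  have hG : HasFDerivAt (fun p : EuclideanSpace ℝ (Fin N) × ℝ => poissonConst N s *
      ∫ η : EuclideanSpace ℝ (Fin N), (‖η‖ ^ 2 + 1) ^ (-((N : ℝ) + 2 * s) / 2) *
        bubble N s x Λ (p.1 - p.2 • η)) (poissonConst N s • Φ) (y, t) :=
    hΦ.const_mul _
  have hdiff : DifferentiableAt ℝ (fun p : EuclideanSpace ℝ (Fin N) × ℝ =>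
      poissonExt N s (bubble N s x Λ) p.1 p.2) (y, t) :=
    hG.differentiableAt.congr_of_eventuallyEq hev
  refine ⟨hdiff, ?_⟩
  rw [hev.fderiv_eq, hG.fderiv]
  have h1 : ‖poissonConst N s • Φ‖ ≤ |poissonConst N s| * (M * I) := by
    rw [norm_smul (poissonConst N s) Φ, Real.norm_eq_abs]
    exact mul_le_mul_of_nonneg_left hΦnorm (abs_nonneg _)
  have hrδ : ‖y - x‖ ≤ δ := by nlinarith [norm_nonneg (y - x), sq_nonneg t]
  have h2 : (1 + ‖y - x‖) ^ ((N : ℝ) - 2 * s + 1) ≤ (1 + δ) ^ ((N : ℝ) - 2 * s + 1) :=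
    Real.rpow_le_rpow (by positivity) (by linarith) ha0
  have hbase : (0:ℝ) < (1 + ‖y - x‖) ^ ((N : ℝ) - 2 * s + 1) :=
    Real.rpow_pos_of_pos (by positivity) _
  have h3 : (1:ℝ) ≤ (1 + δ) ^ ((N : ℝ) - 2 * s + 1) *
      ((1 + ‖y - x‖) ^ ((N : ℝ) - 2 * s + 1))⁻¹ := by
    have := (one_le_div hbase).mpr h2
    rwa [div_eq_mul_inv] at this
  calc ‖poissonConst N s • Φ‖ ≤ |poissonConst N s| * (M * I) := h1
    _ ≤ K := by rw [hKdef]; linarith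
    _ = K * 1 := (mul_one K).symm
    _ ≤ K * ((1 + δ) ^ ((N : ℝ) - 2 * s + 1) *
        ((1 + ‖y - x‖) ^ ((N : ℝ) - 2 * s + 1))⁻¹) :=
        mul_le_mul_of_nonneg_left h3 hKpos.le
    _ = K * (1 + δ) ^ ((N : ℝ) - 2 * s + 1) *
        (1 + ‖y - x‖) ^ (-((N : ℝ) - 2 * s + 1)) := by
        rw [Real.rpow_neg (by positivity : (0:ℝ) ≤ 1 + ‖y - x‖)]; ring
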